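/- Let $A$ be a nonempty finite set of real numbers and let $q > p \ge 1$ be real numbers (in particular, integers). Then $|p \cdot A + q \cdot A| \ge 3|A| - 2$. -/
import Mathlib


open Pointwise

lemma card_dilates_aux (p q : ℝ) (hp : 0 < p) (hpq : p < q) :
    ∀ n (A : Finset ℝ), A.card = n → A.Nonempty →
      3 * (A.card : ℤ) - 2 ≤ ((p • A + q • A).card : ℤ) := by
  have hq : 0 < q := hp.trans hpq
  intro n
  induction n with
  | zero => intro A hcard hA; simp [Finset.card_eq_zero.mp hcard] at hA
  | succ n ih =>
    intro A hcard hA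
    rcases Nat.eq_zero_or_pos n with hn | hn
    · subst hn
      obtain ⟨a, rfl⟩ := Finset.card_eq_one.mp hcard
      have : p • ({a} : Finset ℝ) + q • ({a} : Finset ℝ) = {p * a + q * a} := by
        simp [Finset.smul_finset_singleton, Finset.singleton_add_singleton, smul_eq_mul]
      rw [this]
      simp
    · set M := A.max' hA with hM
      have hMA : M ∈ A := A.max'_mem hA
      set A' := A.erase M with hA'
      have hcard' : A'.card = n := by
        rw [hA', Finset.card_erase_of_mem hMA, hcard]; rfl
      have hA'ne : A'.Nonempty := Finset.card_pos.mp (hcard' ▸ hn)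
      set m := A'.max' hA'ne with hm
      have hmA' : m ∈ A' := A'.max'_mem hA'ne
      have hmA : m ∈ A := Finset.mem_of_mem_erase hmA'
      have hmM : m < M := lt_of_le_of_ne (A.le_max' m hmA) (Finset.ne_of_mem_erase hmA')
      set S := p • A' + q • A' with hS
      -- every element of S is at most p*m + q*m
      have hSle : ∀ s ∈ S, s ≤ p * m + q * m := by
        intro s hs
        rw [hS, Finset.mem_add] at hs
        obtain ⟨x, hx, y, hy, rfl⟩ := hs
        rw [Finset.mem_smul_finset] at hx hy
        obtain ⟨a, ha, rfl⟩ := hx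
        obtain ⟨b, hb, rfl⟩ := hy
        have h1 : a ≤ m := A'.le_max' a ha
        have h2 : b ≤ m := A'.le_max' b hb
        simp only [smul_eq_mul]
        have := mul_le_mul_of_nonneg_left h1 hp.le
        have := mul_le_mul_of_nonneg_left h2 hq.le
        linarith
      set x2 := p * M + q * m with hx2
      set x1 := p * m + q * M with hx1
      set x3 := p * M + q * M with hx3
      have h21 : x2 < x1 := by nlinarith
      have h13 : x1 < x3 := by nlinarith
      have hS2 : ∀ s ∈ S, s < x2 := by
        intro s hs
        have := hSle s hs
        nlinarith
      -- membership of the three points in p•A + q•A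
      have hmem : ∀ a ∈ A, ∀ b ∈ A, p * a + q * b ∈ p • A + q • A := by
        intro a ha b hb
        exact Finset.add_mem_add (Finset.smul_mem_smul_finset ha)
          (Finset.smul_mem_smul_finset hb)
      have hsub : insert x3 (insert x1 (insert x2 S)) ⊆ p • A + q • A := by
        intro x hx
        simp only [Finset.mem_insert] at hx
        rcases hx with rfl | rfl | rfl | hx
        · exact hmem M hMA M hMA
        · exact hmem m hmA M hMA
        · exact hmem M hMA m hmA
        · have hsub' : S ⊆ p • A + q • A :=
            Finset.add_subset_add
              (Finset.smul_finset_subset_smul_finset (A.erase_subset M))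
              (Finset.smul_finset_subset_smul_finset (A.erase_subset M))
          exact hsub' hx
      have hn2 : x2 ∉ S := fun h => absurd (hS2 x2 h) (lt_irrefl x2)
      have hn1 : x1 ∉ insert x2 S := by
        simp only [Finset.mem_insert]
        rintro (h | h)
        · exact absurd h h21.ne'
        · exact absurd (hS2 x1 h) (not_lt.mpr h21.le)
      have hn3 : x3 ∉ insert x1 (insert x2 S) := by
        simp only [Finset.mem_insert]
        rintro (h | h | h)
        · exact absurd h h13.ne'
        · exact absurd h (ne_of_gt (h21.trans h13))
        · exact absurd (hS2 x3 h) (not_lt.mpr (h21.trans h13).le)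
      have hcards : (insert x3 (insert x1 (insert x2 S))).card = S.card + 3 := by
        rw [Finset.card_insert_of_notMem hn3, Finset.card_insert_of_notMem hn1,
          Finset.card_insert_of_notMem hn2]
      have hle : S.card + 3 ≤ (p • A + q • A).card := by
        rw [← hcards]; exact Finset.card_le_card hsub
      have hIH := ih A' hcard' hA'ne
      rw [hcard', ← hS] at hIH
      rw [hcard]
      push_cast
      omega

/-- For a nonempty finite set `A ⊆ ℝ` and real numbers `q > p ≥ 1`,
`|p ⬝ A + q ⬝ A| ≥ 3|A| - 2`. -/
theorem card_dilates_ge_three (p q : ℝ) (hp : 1 ≤ p) (hpq : p < q)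
    (A : Finset ℝ) (hA : A.Nonempty) :
    ((p • A + q • A).card : ℤ) ≥ 3 * A.card - 2 := by
  exact card_dilates_aux p q (lt_of_lt_of_le one_pos hp) hpq A.card A rfl hA
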